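/- Let u₁, u₂, u₃ be three unit vectors in ℝ² with pairwise angles of 120° (equivalently, u₁ + u₂ + u₃ = 0 and each has norm 1), and let μ > 0. Define the spiral sequence P : ℕ → ℝ² by P₀ = 0 and, for the unique j ≥ 1 with j(j−1)/2 ≤ n < j(j+1)/2, P_{n+1} = P_n + μ • u_{((j−1) mod 3)+1}. Then for every point q ∈ ℝ² there exists n ∈ ℕ with dist(q, P_n) ≤ 2μ. In particular, for any visibility radius V ≥ 2μ, every point of the plane is within distance V of some point P_n of the spiral. -/

import Mathlib

open scoped RealInnerProductSpace

private lemma tri_step (i : ℕ) : (i+1)*i/2 + (i+1) = (i+2)*(i+1)/2 := by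
  obtain ⟨t, ht⟩ := Nat.even_mul_succ_self i
  have h1 : (i+1)*i = 2*t := by nlinarith
  have h2 : (i+2)*(i+1) = 2*t + 2*(i+1) := by nlinarith
  omega

section Spiral

variable (u : Fin 3 → EuclideanSpace ℝ (Fin 2)) (μ : ℝ)
    (P : ℕ → EuclideanSpace ℝ (Fin 2))
    (hstep : ∀ n j : ℕ, 1 ≤ j → j * (j - 1) / 2 ≤ n → n < j * (j + 1) / 2 →
      P (n + 1) = P n + μ • u ⟨(j - 1) % 3, Nat.mod_lt _ (by norm_num)⟩)

include hstep in
private lemma leg_formula (i k : ℕ) (hk : k ≤ i+1) :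
    P ((i+1)*i/2 + k) = P ((i+1)*i/2)
      + (k:ℝ) • (μ • u ⟨i % 3, by omega⟩) := by
  induction k with
  | zero => simp
  | succ k ih =>
    have hki : k ≤ i := by omega
    have hb : (i+1)*((i+1)-1)/2 ≤ (i+1)*i/2 + k := by rw [Nat.add_sub_cancel]; omega
    have hub : (i+1)*i/2 + k < (i+1)*((i+1)+1)/2 := by
      have := tri_step i
      have h2 : (i+1)*((i+1)+1) = (i+2)*(i+1) := by ring
      omega
    have hs := hstep ((i+1)*i/2 + k) (i+1) (by omega) hb hub
    simp only [Nat.add_sub_cancel] at hs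
    have : (i+1)*i/2 + (k+1) = ((i+1)*i/2 + k) + 1 := by omega
    rw [this, hs, ih (by omega)]
    push_cast
    module

end Spiral

section Spiral2

variable (u : Fin 3 → EuclideanSpace ℝ (Fin 2)) (μ : ℝ)
    (P : ℕ → EuclideanSpace ℝ (Fin 2))
    (hsum : u 0 + u 1 + u 2 = 0) (hP0 : P 0 = 0)
    (hstep : ∀ n j : ℕ, 1 ≤ j → j * (j - 1) / 2 ≤ n → n < j * (j + 1) / 2 →
      P (n + 1) = P n + μ • u ⟨(j - 1) % 3, Nat.mod_lt _ (by norm_num)⟩)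

include hsum hP0 hstep

private lemma round_start (m : ℕ) :
    P ((3*m+1)*(3*m)/2) = (m:ℝ) • (μ • (u 2 - u 0)) := by
  have hb : u 1 = -u 0 - u 2 := by linear_combination (norm := module) hsum
  induction m with
  | zero => simpa using hP0
  | succ m ih =>
    have e0 : (⟨(3*m) % 3, by omega⟩ : Fin 3) = 0 := by
      ext; simp [Nat.mul_mod_right]
    have e1 : (⟨(3*m+1) % 3, by omega⟩ : Fin 3) = 1 := by
      ext; simp [Nat.add_mul_mod_self_left, Nat.mul_mod_right]
    have e2 : (⟨(3*m+2) % 3, by omega⟩ : Fin 3) = 2 := by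
      ext; simp [Nat.add_mul_mod_self_left, Nat.mul_mod_right]
    have t1 := tri_step (3*m)
    have t2 := tri_step (3*m+1)
    have t3 := tri_step (3*m+2)
    have L1 := leg_formula u μ P hstep (3*m) (3*m+1) le_rfl
    have L2 := leg_formula u μ P hstep (3*m+1) (3*m+2) le_rfl
    have L3 := leg_formula u μ P hstep (3*m+2) (3*m+3) le_rfl
    rw [e0] at L1; rw [e1] at L2; rw [e2] at L3
    have idx : (3*(m+1)+1)*(3*(m+1)) = (3*m+3+1)*(3*m+3) := by ring
    rw [idx]
    have i1 : (3*m+1)*(3*m)/2 + (3*m+1) = (3*m+1+1)*(3*m+1)/2 := by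
      have h : (3*m+1+1)*(3*m+1) = (3*m+2)*(3*m+1) := by ring
      omega
    have i2 : (3*m+1+1)*(3*m+1)/2 + (3*m+2) = (3*m+2+1)*(3*m+2)/2 := by
      have h : (3*m+1+2)*(3*m+1+1) = (3*m+2+1)*(3*m+2) := by ring
      omega
    have i3 : (3*m+2+1)*(3*m+2)/2 + (3*m+3) = (3*m+3+1)*(3*m+3)/2 := by
      have h : (3*m+2+2)*(3*m+2+1) = (3*m+3+1)*(3*m+3) := by ring
      omega
    rw [i1, ih] at L1
    rw [i2, L1] at L2
    rw [i3, L2] at L3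
    rw [L3, hb]
    push_cast
    module


private lemma point_A (m k : ℕ) (hk : k ≤ 3*m+1) :
    P ((3*m+1)*(3*m)/2 + k) = μ • (((k:ℝ)-(m:ℝ)) • u 0 + (m:ℝ) • u 2) := by
  have e0 : (⟨(3*m) % 3, by omega⟩ : Fin 3) = 0 := by
    ext; simp [Nat.mul_mod_right]
  have L := leg_formula u μ P hstep (3*m) k hk
  rw [e0, round_start u μ P hsum hP0 hstep m] at L
  rw [L]; module

private lemma point_B (m k : ℕ) (hk : k ≤ 3*m+2) :
    P ((3*m+1+1)*(3*m+1)/2 + k)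
      = μ • ((2*(m:ℝ)+1-(k:ℝ)) • u 0 + ((m:ℝ)-(k:ℝ)) • u 2) := by
  have hb : u 1 = -u 0 - u 2 := by linear_combination (norm := module) hsum
  have e1 : (⟨(3*m+1) % 3, by omega⟩ : Fin 3) = 1 := by
    ext; simp [Nat.add_mul_mod_self_left, Nat.mul_mod_right]
  have i1 : (3*m+1)*(3*m)/2 + (3*m+1) = (3*m+1+1)*(3*m+1)/2 := by
    have h : (3*m+1+1)*(3*m+1) = (3*m+2)*(3*m+1) := by ring
    have := tri_step (3*m)
    omega
  have S := point_A u μ P hsum hP0 hstep m (3*m+1) le_rfl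
  rw [i1] at S
  have L := leg_formula u μ P hstep (3*m+1) k hk
  rw [e1, S, hb] at L
  rw [L]; push_cast; module

private lemma point_C (m k : ℕ) (hk : k ≤ 3*m+3) :
    P ((3*m+2+1)*(3*m+2)/2 + k)
      = μ • ((-(m:ℝ)-1) • u 0 + ((k:ℝ)-2*(m:ℝ)-2) • u 2) := by
  have e2 : (⟨(3*m+2) % 3, by omega⟩ : Fin 3) = 2 := by
    ext; simp [Nat.add_mul_mod_self_left, Nat.mul_mod_right]
  have i2 : (3*m+1+1)*(3*m+1)/2 + (3*m+2) = (3*m+2+1)*(3*m+2)/2 := by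
    have h : (3*m+1+2)*(3*m+1+1) = (3*m+2+1)*(3*m+2) := by ring
    have := tri_step (3*m+1)
    omega
  have S := point_B u μ P hsum hP0 hstep m (3*m+2) le_rfl
  rw [i2] at S
  have L := leg_formula u μ P hstep (3*m+2) k hk
  rw [e2, S] at L
  rw [L]; push_cast; module

private lemma lattice (p q : ℤ) :
    ∃ n, P n = μ • ((p:ℝ) • u 0 + (q:ℝ) • u 2) := by
  by_cases hA : 0 ≤ q ∧ -q ≤ p ∧ p ≤ 2*q+1
  · obtain ⟨h1, h2, h3⟩ := hA
    refine ⟨(3*q.toNat+1)*(3*q.toNat)/2 + (p+q).toNat, ?_⟩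
    rw [point_A u μ P hsum hP0 hstep q.toNat (p+q).toNat (by omega)]
    have c1 : ((p+q).toNat : ℝ) - (q.toNat : ℝ) = (p:ℝ) := by
      have : (((p+q).toNat : ℤ) - (q.toNat : ℤ)) = p := by omega
      exact_mod_cast this
    have c2 : ((q.toNat : ℕ) : ℝ) = (q:ℝ) := by
      have : ((q.toNat : ℤ)) = q := by omega
      exact_mod_cast this
    rw [c1, c2]
  by_cases hB : 2*q+1 ≤ p ∧ q ≤ 2*p
  · obtain ⟨h1, h2⟩ := hB
    set m := (p - q - 1).toNat
    set k := (p - 2*q - 1).toNat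
    refine ⟨(3*m+1+1)*(3*m+1)/2 + k, ?_⟩
    rw [point_B u μ P hsum hP0 hstep m k (by omega)]
    have c1 : 2*((m:ℕ):ℝ)+1-((k:ℕ):ℝ) = (p:ℝ) := by
      have : 2*((m:ℤ))+1-((k:ℤ)) = p := by omega
      exact_mod_cast this
    have c2 : ((m:ℕ):ℝ)-((k:ℕ):ℝ) = (q:ℝ) := by
      have : ((m:ℤ))-((k:ℤ)) = q := by omega
      exact_mod_cast this
    rw [c1, c2]
  · have hC : p ≤ -1 ∧ 2*p ≤ q ∧ q ≤ -p := by omega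
    obtain ⟨h1, h2, h3⟩ := hC
    set m := (-p - 1).toNat
    set k := (q - 2*p).toNat
    refine ⟨(3*m+2+1)*(3*m+2)/2 + k, ?_⟩
    rw [point_C u μ P hsum hP0 hstep m k (by omega)]
    have c1 : -((m:ℕ):ℝ)-1 = (p:ℝ) := by
      have : -((m:ℤ))-1 = p := by omega
      exact_mod_cast this
    have c2 : ((k:ℕ):ℝ)-2*((m:ℕ):ℝ)-2 = (q:ℝ) := by
      have : ((k:ℤ))-2*((m:ℤ))-2 = q := by omega
      exact_mod_cast this
    rw [c1, c2]

end Spiral2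

/-- Geometric core of Theorem 4: the triangular spiral traced by a basic
TuringMobile (steps of length `μ` in three directions 120° apart, making `j`
consecutive steps in the `(((j-1) mod 3)+1)`-th direction on the `j`-th leg)
passes within distance `2μ` of every point of the plane. -/
theorem turingmobile_spiral_explores_plane
    (u : Fin 3 → EuclideanSpace ℝ (Fin 2))
    (hu : ∀ i, ‖u i‖ = 1) (hsum : u 0 + u 1 + u 2 = 0)
    (μ : ℝ) (hμ : 0 < μ)
    (P : ℕ → EuclideanSpace ℝ (Fin 2)) (hP0 : P 0 = 0)
    (hstep : ∀ n j : ℕ, 1 ≤ j → j * (j - 1) / 2 ≤ n → n < j * (j + 1) / 2 →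
      P (n + 1) = P n + μ • u ⟨(j - 1) % 3, by omega⟩) :
    (∀ q : EuclideanSpace ℝ (Fin 2), ∃ n : ℕ, dist q (P n) ≤ 2 * μ) ∧
    (∀ V : ℝ, 2 * μ ≤ V →
      ∀ q : EuclideanSpace ℝ (Fin 2), ∃ n : ℕ, dist q (P n) ≤ V) := by
  have hb : u 1 = -u 0 - u 2 := by linear_combination (norm := module) hsum
  have hinner : (inner ℝ (u 0) (u 2) : ℝ) = -(1/2) := by
    have h1 : ‖u 0 + u 2‖ = 1 := by
      have : u 0 + u 2 = -u 1 := by rw [hb]; abel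
      rw [this, norm_neg, hu 1]
    have h2 := norm_add_sq_real (u 0) (u 2)
    rw [h1, hu 0, hu 2] at h2
    linarith
  have hli : LinearIndependent ℝ ![u 0, u 2] := by
    rw [LinearIndependent.pair_iff]
    intro s t hst
    have e1 := congrArg (fun v => (inner ℝ (u 0) v : ℝ)) hst
    have e2 := congrArg (fun v => (inner ℝ (u 2) v : ℝ)) hst
    simp only [inner_add_right, real_inner_smul_right, inner_zero_right,
      real_inner_self_eq_norm_sq, real_inner_comm (u 0) (u 2), hinner,
      hu 0, hu 2] at e1 e2
    constructor <;> nlinarith [e1, e2]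
  have hcard : Fintype.card (Fin 2) = Module.finrank ℝ (EuclideanSpace ℝ (Fin 2)) := by
    simp [finrank_euclideanSpace]
  let B := basisOfLinearIndependentOfCardEqFinrank hli hcard
  have hB : ∀ i, B i = ![u 0, u 2] i := fun i => by
    simp [B, coe_basisOfLinearIndependentOfCardEqFinrank]
  have main : ∀ q : EuclideanSpace ℝ (Fin 2), ∃ n : ℕ, dist q (P n) ≤ 2 * μ := by
    intro q
    have hrepr := B.sum_repr q
    rw [Fin.sum_univ_two, hB 0, hB 1] at hrepr
    set x : ℝ := B.repr q 0
    set y : ℝ := B.repr q 1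
    have hq : q = x • u 0 + y • u 2 := by
      rw [← hrepr]; rfl
    obtain ⟨n, hn⟩ := lattice u μ P hsum hP0 hstep (round (x/μ)) (round (y/μ))
    refine ⟨n, ?_⟩
    rw [dist_eq_norm, hn, hq]
    have key : (x • u 0 + y • u 2) - μ • ((round (x/μ) : ℝ) • u 0 + (round (y/μ) : ℝ) • u 2)
        = (x - μ * (round (x/μ) : ℝ)) • u 0 + (y - μ * (round (y/μ) : ℝ)) • u 2 := by
      module
    rw [key]
    have hx : |x - μ * (round (x/μ) : ℝ)| ≤ μ/2 := by
      have h := abs_sub_round (x/μ)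
      have : x - μ * (round (x/μ) : ℝ) = μ * (x/μ - (round (x/μ) : ℝ)) := by
        field_simp
      rw [this, abs_mul, abs_of_pos hμ]
      nlinarith
    have hy : |y - μ * (round (y/μ) : ℝ)| ≤ μ/2 := by
      have h := abs_sub_round (y/μ)
      have : y - μ * (round (y/μ) : ℝ) = μ * (y/μ - (round (y/μ) : ℝ)) := by
        field_simp
      rw [this, abs_mul, abs_of_pos hμ]
      nlinarith
    calc ‖(x - μ * (round (x/μ) : ℝ)) • u 0 + (y - μ * (round (y/μ) : ℝ)) • u 2‖
        ≤ ‖(x - μ * (round (x/μ) : ℝ)) • u 0‖ + ‖(y - μ * (round (y/μ) : ℝ)) • u 2‖ :=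
          norm_add_le _ _
      _ = |x - μ * (round (x/μ) : ℝ)| + |y - μ * (round (y/μ) : ℝ)| := by
          rw [norm_smul, norm_smul, hu 0, hu 2, mul_one, mul_one, Real.norm_eq_abs,
            Real.norm_eq_abs]
      _ ≤ μ/2 + μ/2 := add_le_add hx hy
      _ ≤ 2 * μ := by linarith
  exact ⟨main, fun V hV q => (main q).imp fun n h => h.trans hV⟩
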